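/- Hill's formula for discrete Lagrangian systems: for a periodic linear discrete Lagrangian system with monodromy matrix P and Hessian H, one has det(P − I_{2m}) = (−1)^m · det(H) / (∏_{i=1}^n det B_i). -/

import Mathlib

open Matrix BigOperators

/-- The transfer matrix `T_i` of a periodic linear discrete Lagrangian system,
sending `(u_{i-1}, u_i)` to `(u_i, (B_iᵀ)⁻¹ (A_i u_i - B_{i-1} u_{i-1}))`,
written as a block matrix. -/
noncomputable def transferMatrix (m : ℕ) (A B : ℤ → Matrix (Fin m) (Fin m) ℝ) (i : ℤ) :
    Matrix (Fin m ⊕ Fin m) (Fin m ⊕ Fin m) ℝ :=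
  Matrix.fromBlocks 0 1 (-(((B i)ᵀ)⁻¹ * B (i - 1))) (((B i)ᵀ)⁻¹ * A i)

/-- The monodromy matrix `P = T_n ⋯ T_1`. -/
noncomputable def monodromy (m n : ℕ) (A B : ℤ → Matrix (Fin m) (Fin m) ℝ) :
    Matrix (Fin m ⊕ Fin m) (Fin m ⊕ Fin m) ℝ :=
  (List.range n).foldl (fun M i => transferMatrix m A B ((i : ℤ) + 1) * M) 1

/-- The Hessian of the action: the symmetric `(mn) × (mn)` matrix acting by
`(H u)_i = A_i u_i - B_{i-1} u_{i-1} - B_iᵀ u_{i+1}` with cyclic conventions. -/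
noncomputable def hessian (m n : ℕ) [NeZero n] (A B : ℤ → Matrix (Fin m) (Fin m) ℝ) :
    Matrix (Fin n × Fin m) (Fin n × Fin m) ℝ :=
  fun p q =>
    (if q.1 = p.1 then A ((p.1 : ℕ) : ℤ) p.2 q.2 else 0)
    + (if q.1 = p.1 - 1 then -(B (((p.1 : ℕ) : ℤ) - 1) p.2 q.2) else 0)
    + (if q.1 = p.1 + 1 then -(B ((p.1 : ℕ) : ℤ) q.2 p.2) else 0)

namespace HillAux

/-! ### Generic determinant helpers for block matrices -/

/-- Compose an `N × N` matrix of `σ × σ` matrices into a big matrix. -/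
def cmp {N : ℕ} {σ : Type*} (M : Matrix (Fin N) (Fin N) (Matrix σ σ ℝ)) :
    Matrix (Fin N × σ) (Fin N × σ) ℝ := fun p q => M p.1 q.1 p.2 q.2

lemma cmp_mul {N : ℕ} {σ : Type*} [Fintype σ] (M P : Matrix (Fin N) (Fin N) (Matrix σ σ ℝ)) :
    cmp (M * P) = cmp M * cmp P := by
  ext ⟨i, a⟩ ⟨j, b⟩
  simp [cmp, Matrix.mul_apply, Matrix.sum_apply, Fintype.sum_prod_type]

lemma det_toSquareBlock_fst {N : ℕ} {σ : Type*} [Fintype σ] [DecidableEq σ]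
    (M : Matrix (Fin N) (Fin N) (Matrix σ σ ℝ)) (k : Fin N) :
    ((cmp M).toSquareBlock Prod.fst k).det = (M k k).det := by
  let e : σ ≃ {p : Fin N × σ // p.1 = k} :=
    { toFun := fun a => ⟨(k, a), rfl⟩
      invFun := fun p => p.1.2
      left_inv := fun a => rfl
      right_inv := fun p => by
        rcases p with ⟨⟨i, a⟩, h⟩
        subst h
        rfl }
  have : M k k = ((cmp M).toSquareBlock Prod.fst k).submatrix e e := rfl
  rw [this, Matrix.det_submatrix_equiv_self]

lemma det_cmp_upper {N : ℕ} {σ : Type*} [Fintype σ] [DecidableEq σ]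
    (M : Matrix (Fin N) (Fin N) (Matrix σ σ ℝ))
    (h : ∀ i j : Fin N, j < i → M i j = 0) :
    (cmp M).det = ∏ i, (M i i).det := by
  have hb : (cmp M).BlockTriangular Prod.fst := by
    intro p q hlt
    show M p.1 q.1 p.2 q.2 = 0
    rw [h _ _ hlt]
    rfl
  rw [hb.det_fintype]
  exact Finset.prod_congr rfl fun k _ => det_toSquareBlock_fst M k

lemma det_cmp_lower {N : ℕ} {σ : Type*} [Fintype σ] [DecidableEq σ]
    (M : Matrix (Fin N) (Fin N) (Matrix σ σ ℝ))
    (h : ∀ i j : Fin N, i < j → M i j = 0) :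
    (cmp M).det = ∏ i, (M i i).det := by
  rw [← Matrix.det_transpose]
  have h1 : (cmp M)ᵀ = cmp (Matrix.of fun i j => (M j i)ᵀ) := rfl
  rw [h1, det_cmp_upper _ (fun i j hj => by rw [Matrix.of_apply, h _ _ hj]; rfl)]
  exact Finset.prod_congr rfl fun k _ => Matrix.det_transpose _

/-- equiv onto the `inl` square block subtype -/
def eL (N m : ℕ) : (Fin N × Fin m) ≃
    {p : Fin N × (Fin m ⊕ Fin m) // (Sum.isRight p.2 : Bool) = false} where
  toFun x := ⟨(x.1, Sum.inl x.2), rfl⟩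
  invFun p := (p.1.1, Sum.elim id id p.1.2)
  left_inv x := rfl
  right_inv p := by
    rcases p with ⟨⟨i, c | c⟩, hc⟩
    · rfl
    · simp at hc

def eR (N m : ℕ) : (Fin N × Fin m) ≃
    {p : Fin N × (Fin m ⊕ Fin m) // (Sum.isRight p.2 : Bool) = true} where
  toFun x := ⟨(x.1, Sum.inr x.2), rfl⟩
  invFun p := (p.1.1, Sum.elim id id p.1.2)
  left_inv x := rfl
  right_inv p := by
    rcases p with ⟨⟨i, c | c⟩, hc⟩
    · simp at hc
    · rfl

lemma det_cmp_bool {N m : ℕ}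
    (M : Matrix (Fin N) (Fin N) (Matrix (Fin m ⊕ Fin m) (Fin m ⊕ Fin m) ℝ))
    (h : ∀ i j a b, M i j (Sum.inr a) (Sum.inl b) = 0) :
    (cmp M).det
      = (Matrix.det fun p q : Fin N × Fin m => M p.1 q.1 (Sum.inl p.2) (Sum.inl q.2))
        * (Matrix.det fun p q : Fin N × Fin m => M p.1 q.1 (Sum.inr p.2) (Sum.inr q.2)) := by
  have hb : (cmp M).BlockTriangular (fun p => (Sum.isRight p.2 : Bool)) := by
    rintro ⟨i, a | a⟩ ⟨j, b | b⟩ hlt <;> simp only [Sum.isRight] at hlt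
    · exact absurd hlt (by decide)
    · exact absurd hlt (by decide)
    · exact h i j a b
    · exact absurd hlt (by decide)
  rw [hb.det_fintype, Fintype.prod_bool]
  rw [mul_comm]
  congr 1
  · have : (fun p q : Fin N × Fin m => M p.1 q.1 (Sum.inl p.2) (Sum.inl q.2))
        = ((cmp M).toSquareBlock (fun p => (Sum.isRight p.2 : Bool)) false).submatrix
            (eL N m) (eL N m) := rfl
    rw [this, Matrix.det_submatrix_equiv_self]
  · have : (fun p q : Fin N × Fin m => M p.1 q.1 (Sum.inr p.2) (Sum.inr q.2))
        = ((cmp M).toSquareBlock (fun p => (Sum.isRight p.2 : Bool)) true).submatrix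
            (eR N m) (eR N m) := rfl
    rw [this, Matrix.det_submatrix_equiv_self]

lemma det_cmp_bool' {N m : ℕ}
    (M : Matrix (Fin N) (Fin N) (Matrix (Fin m ⊕ Fin m) (Fin m ⊕ Fin m) ℝ))
    (h : ∀ i j a b, M i j (Sum.inl a) (Sum.inr b) = 0) :
    (cmp M).det
      = (Matrix.det fun p q : Fin N × Fin m => M p.1 q.1 (Sum.inl p.2) (Sum.inl q.2))
        * (Matrix.det fun p q : Fin N × Fin m => M p.1 q.1 (Sum.inr p.2) (Sum.inr q.2)) := by
  rw [← Matrix.det_transpose]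
  have h1 : (cmp M)ᵀ = cmp (Matrix.of fun i j => (M j i)ᵀ) := rfl
  rw [h1, det_cmp_bool _ (fun i j a b => by
    show (M j i) (Sum.inl b) (Sum.inr a) = 0
    exact h j i b a)]
  congr 1
  · exact Matrix.det_transpose _
  · exact Matrix.det_transpose _

/-! ### The specific matrices -/

variable (m : ℕ) (A B : ℤ → Matrix (Fin m) (Fin m) ℝ)

noncomputable def Tk (k : ℕ) : Matrix (Fin m ⊕ Fin m) (Fin m ⊕ Fin m) ℝ :=
  transferMatrix m A B ((k : ℤ) + 1)

noncomputable def Qk : ℕ → Matrix (Fin m ⊕ Fin m) (Fin m ⊕ Fin m) ℝ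
  | 0 => 1
  | (k + 1) => Tk m A B k * Qk k

lemma monodromy_eq (n : ℕ) : monodromy m n A B = Qk m A B n := by
  have h : ∀ j, monodromy m j A B = (List.range j).foldl (fun M i => Tk m A B i * M) 1 := by
    intro j
    rw [monodromy]
    simp only [List.pure_def, List.bind_eq_flatMap]
    rw [← List.map_eq_flatMap (f := fun a => ((a : ℕ) : ℤ)) (l := List.range j), List.foldl_map]
    rfl
  induction n with
  | zero => rw [h]; rfl
  | succ k ih => rw [h, List.range_succ, List.foldl_append, ← h, ih]; rfl

lemma prod_det_Tk (N : ℕ) :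
    ∏ i : Fin N, (Tk m A B (i : ℕ)).det = (Qk m A B N).det := by
  induction N with
  | zero => simp [Qk]
  | succ k ih =>
      rw [Fin.prod_univ_castSucc]
      simp only [Fin.coe_castSucc, Fin.val_last]
      rw [ih, Qk, Matrix.det_mul, mul_comm]

variable (hB : ∀ i, IsUnit (B i).det)

lemma hBt (i : ℤ) (hBi : IsUnit (B i).det) : IsUnit ((B i)ᵀ).det := by
  rw [Matrix.det_transpose]; exact hBi

include hB in
lemma isUnit_Tk_det (k : ℕ) : IsUnit (Tk m A B k).det := by
  set i : ℤ := (k : ℤ) + 1 with hi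
  have h1 : IsUnit ((B i)ᵀ).det := hBt m B i (hB i)
  have h2 : IsUnit (B (i - 1)).det := hB (i - 1)
  set X : Matrix (Fin m) (Fin m) ℝ := ((B i)ᵀ)⁻¹ * B (i - 1) with hX
  set X' : Matrix (Fin m) (Fin m) ℝ := (B (i - 1))⁻¹ * (B i)ᵀ with hX'
  have hXX' : X * X' = 1 := by
    rw [hX, hX', Matrix.mul_assoc, ← Matrix.mul_assoc (B (i-1)),
      Matrix.mul_nonsing_inv _ h2, Matrix.one_mul, Matrix.nonsing_inv_mul _ h1]
  set Y : Matrix (Fin m) (Fin m) ℝ := ((B i)ᵀ)⁻¹ * A i with hY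
  have hTW : Tk m A B k * Matrix.fromBlocks (X' * Y) (-X') 1 0 = 1 := by
    rw [Tk, transferMatrix, ← hi, ← hX, ← hY, Matrix.fromBlocks_multiply]
    rw [show ((0 : Matrix (Fin m) (Fin m) ℝ) * (X' * Y) + 1 * 1) = 1 by simp]
    rw [show ((0 : Matrix (Fin m) (Fin m) ℝ) * (-X') + 1 * 0) = 0 by simp]
    rw [show (-X * (X' * Y) + Y * 1) = 0 by
      rw [← Matrix.mul_assoc]; simp [hXX']]
    rw [show (-X * (-X') + Y * 0) = 1 by simp [hXX']]
    exact Matrix.fromBlocks_one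
  exact Matrix.isUnit_det_of_right_inverse hTW

include hB in
lemma isUnit_Qk_det (k : ℕ) : IsUnit (Qk m A B k).det := by
  induction k with
  | zero => simp [Qk]
  | succ k ih =>
      rw [Qk, Matrix.det_mul]
      exact (isUnit_Tk_det m A B hB k).mul ih

variable (N : ℕ)

noncomputable def Kb : Matrix (Fin (N+1)) (Fin (N+1)) (Matrix (Fin m ⊕ Fin m) (Fin m ⊕ Fin m) ℝ) :=
  fun i j => (if j = i then Tk m A B (i : ℕ) else 0) - (if j = i + 1 then 1 else 0)

noncomputable def Ub : Matrix (Fin (N+1)) (Fin (N+1)) (Matrix (Fin m ⊕ Fin m) (Fin m ⊕ Fin m) ℝ) :=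
  fun i j => if i ≤ j then Qk m A B (i : ℕ) * (Qk m A B (j : ℕ))⁻¹ else 0

noncomputable def Db : Matrix (Fin (N+1)) (Fin (N+1)) (Matrix (Fin m ⊕ Fin m) (Fin m ⊕ Fin m) ℝ) :=
  fun i j => if j = i then Matrix.fromBlocks 1 0 0 ((B ((i : ℤ) + 1))ᵀ) else 0

noncomputable def Eb : Matrix (Fin (N+1)) (Fin (N+1)) (Matrix (Fin m ⊕ Fin m) (Fin m ⊕ Fin m) ℝ) :=
  fun i j => (if j = i then 1 else 0)
    + (if j = i - 1 then Matrix.fromBlocks 0 0 (-(B (i : ℤ))) 0 else 0)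

lemma KUb (i j : Fin (N+1)) :
    (Kb m A B N * Ub m A B N) i j
      = Tk m A B (i : ℕ) * Ub m A B N i j - Ub m A B N (i+1) j := by
  simp only [Matrix.mul_apply, Kb, sub_mul, ite_mul, zero_mul, one_mul,
    Finset.sum_sub_distrib, Finset.sum_ite_eq', Finset.mem_univ, if_true]


include hB in
lemma KU_upper (i j : Fin (N+1)) (hij : i < j) :
    (Kb m A B N * Ub m A B N) i j = 0 := by
  have hlast : i ≠ Fin.last N := Fin.ne_last_of_lt hij
  have hsucc : ((i+1 : Fin (N+1)) : ℕ) = (i : ℕ) + 1 := by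
    rw [Fin.val_add_one, if_neg hlast]
  have h2 : i + 1 ≤ j := by
    rw [Fin.le_def, hsucc]
    exact hij
  rw [KUb, Ub, Ub, if_pos (le_of_lt hij), if_pos h2, hsucc]
  rw [← Matrix.mul_assoc]
  rw [show Tk m A B (i : ℕ) * Qk m A B (i : ℕ) = Qk m A B ((i : ℕ) + 1) from rfl]
  exact sub_self _

include hB in
lemma KU_diag (i : Fin (N+1)) (hlast : i ≠ Fin.last N) :
    (Kb m A B N * Ub m A B N) i i = Tk m A B (i : ℕ) := by
  have hsucc : ((i+1 : Fin (N+1)) : ℕ) = (i : ℕ) + 1 := by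
    rw [Fin.val_add_one, if_neg hlast]
  have h2 : ¬ (i + 1 ≤ i) := by
    rw [Fin.le_def, hsucc]
    omega
  rw [KUb, Ub, Ub, if_pos (le_refl i), if_neg h2, sub_zero,
    Matrix.mul_nonsing_inv _ (isUnit_Qk_det m A B hB (i : ℕ)), Matrix.mul_one]

include hB in
lemma KU_last :
    (Kb m A B N * Ub m A B N) (Fin.last N) (Fin.last N)
      = (Qk m A B (N+1) - 1) * (Qk m A B N)⁻¹ := by
  have h0 : (Fin.last N) + 1 = 0 := by
    rw [Fin.last_add_one]
  rw [KUb, h0, Ub, Ub, if_pos (le_refl _), if_pos (Fin.zero_le _)]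
  simp only [Fin.val_last, Fin.val_zero]
  rw [show Qk m A B 0 = 1 from rfl, Matrix.one_mul, ← Matrix.mul_assoc,
    show Tk m A B N * Qk m A B N = Qk m A B (N + 1) from rfl, sub_mul, Matrix.one_mul]

include hB in
lemma det_cmp_Kb :
    (cmp (Kb m A B N)).det = (Qk m A B (N+1) - 1).det := by
  have hU : (cmp (Ub m A B N)).det = 1 := by
    rw [det_cmp_upper _ (fun i j hj => by
      rw [Ub, if_neg (not_le.mpr hj)])]
    refine Finset.prod_eq_one fun i _ => ?_
    rw [Ub, if_pos (le_refl i), Matrix.mul_nonsing_inv _ (isUnit_Qk_det m A B hB (i : ℕ)),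
      Matrix.det_one]
  have hL : (cmp (Kb m A B N * Ub m A B N)).det = (Qk m A B (N+1) - 1).det := by
    rw [det_cmp_lower _ (fun i j hj => KU_upper m A B hB N i j hj)]
    rw [Fin.prod_univ_castSucc]
    have h1 : ∀ i : Fin N, ((Kb m A B N * Ub m A B N) i.castSucc i.castSucc).det
        = (Tk m A B (i : ℕ)).det := by
      intro i
      rw [KU_diag m A B hB N i.castSucc (Fin.ne_last_of_lt (Fin.castSucc_lt_last i))]
      rw [Fin.coe_castSucc]
    rw [Finset.prod_congr rfl (fun i _ => h1 i), prod_det_Tk,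
      KU_last m A B hB N, Matrix.det_mul]
    have h2 : (Qk m A B N).det * ((Qk m A B N)⁻¹).det = 1 := by
      rw [← Matrix.det_mul, Matrix.mul_nonsing_inv _ (isUnit_Qk_det m A B hB N),
        Matrix.det_one]
    calc (Qk m A B N).det * ((Qk m A B (N+1) - 1).det * ((Qk m A B N)⁻¹).det)
        = (Qk m A B (N+1) - 1).det * ((Qk m A B N).det * ((Qk m A B N)⁻¹).det) := by ring
      _ = (Qk m A B (N+1) - 1).det := by rw [h2, mul_one]
  rw [cmp_mul] at hL
  rw [Matrix.det_mul, hU, mul_one] at hL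
  exact hL


include hB in
lemma DKb (i j : Fin (N+1)) :
    (Db m B N * Kb m A B N) i j
      = (if j = i then Matrix.fromBlocks 0 1 (-(B ((i : ℤ)))) (A ((i : ℤ) + 1)) else 0)
        - (if j = i + 1 then Matrix.fromBlocks 1 0 0 ((B ((i : ℤ) + 1))ᵀ) else 0) := by
  have hstep : (Db m B N * Kb m A B N) i j
      = Matrix.fromBlocks 1 0 0 ((B ((i : ℤ) + 1))ᵀ) * Kb m A B N i j := by
    simp only [Matrix.mul_apply, Db, ite_mul, zero_mul,
      Finset.sum_ite_eq', Finset.mem_univ, if_true]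
  rw [hstep, Kb, mul_sub]
  congr 1
  · by_cases h : j = i
    · rw [if_pos h, if_pos h, Tk, transferMatrix, Matrix.fromBlocks_multiply]
      rw [show (i : ℤ) + 1 - 1 = (i : ℤ) by ring]
      have c1 : (B ((i : ℤ)+1))ᵀ * (((B ((i : ℤ)+1))ᵀ)⁻¹ * B ((i : ℤ))) = B ((i : ℤ)) :=
        Matrix.mul_nonsing_inv_cancel_left _ _ (hBt m B _ (hB _))
      have c2 : (B ((i : ℤ)+1))ᵀ * (((B ((i : ℤ)+1))ᵀ)⁻¹ * A ((i : ℤ)+1)) = A ((i : ℤ)+1) :=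
        Matrix.mul_nonsing_inv_cancel_left _ _ (hBt m B _ (hB _))
      simp [Matrix.mul_neg, c1, c2]
    · rw [if_neg h, if_neg h, Matrix.mul_zero]
  · by_cases h : j = i + 1
    · rw [if_pos h, if_pos h, Matrix.mul_one]
    · rw [if_neg h, if_neg h, Matrix.mul_zero]

include hB in
lemma EDKb (i j : Fin (N+1)) :
    (Eb m B N * (Db m B N * Kb m A B N)) i j
      = (if j = i then Matrix.fromBlocks 0 1 0 (A ((i : ℤ) + 1)) else 0)
        + (if j = i - 1 then Matrix.fromBlocks 0 0 0 (-(B ((i : ℤ)))) else 0)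
        - (if j = i + 1 then Matrix.fromBlocks 1 0 0 ((B ((i : ℤ) + 1))ᵀ) else 0) := by
  have hstep : (Eb m B N * (Db m B N * Kb m A B N)) i j
      = (Db m B N * Kb m A B N) i j
        + Matrix.fromBlocks 0 0 (-(B ((i : ℤ)))) 0 * (Db m B N * Kb m A B N) (i-1) j := by
    simp only [Matrix.mul_apply, Eb, add_mul, ite_mul, zero_mul, one_mul,
      Finset.sum_add_distrib, Finset.sum_ite_eq', Finset.mem_univ, if_true]
  rw [hstep, DKb m A B hB N i j, DKb m A B hB N (i-1) j, sub_add_cancel]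
  rw [mul_sub, mul_ite, mul_ite, Matrix.mul_zero]
  have hP1 : (Matrix.fromBlocks 0 0 (-(B ((i : ℤ)))) 0 : Matrix (Fin m ⊕ Fin m) (Fin m ⊕ Fin m) ℝ) *
        Matrix.fromBlocks 0 1 (-(B (((i-1 : Fin (N+1)) : ℤ)))) (A ((((i-1 : Fin (N+1)) : ℤ)) + 1))
      = (Matrix.fromBlocks 0 0 0 (-(B ((i : ℤ)))) : Matrix (Fin m ⊕ Fin m) (Fin m ⊕ Fin m) ℝ) := by
    rw [Matrix.fromBlocks_multiply]
    simp
  have hP2 : (Matrix.fromBlocks 0 0 (-(B ((i : ℤ)))) 0 : Matrix (Fin m ⊕ Fin m) (Fin m ⊕ Fin m) ℝ) *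
        Matrix.fromBlocks 1 0 0 ((B ((((i-1 : Fin (N+1)) : ℤ)) + 1))ᵀ)
      = (Matrix.fromBlocks 0 0 (-(B ((i : ℤ)))) 0 : Matrix (Fin m ⊕ Fin m) (Fin m ⊕ Fin m) ℝ) := by
    rw [Matrix.fromBlocks_multiply]
    simp
  rw [hP1, hP2]
  have hG : (Matrix.fromBlocks 0 1 (-(B ((i : ℤ)))) (A ((i : ℤ) + 1))
        : Matrix (Fin m ⊕ Fin m) (Fin m ⊕ Fin m) ℝ)
      - Matrix.fromBlocks 0 0 (-(B ((i : ℤ)))) 0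
      = (Matrix.fromBlocks 0 1 0 (A ((i : ℤ) + 1)) : Matrix (Fin m ⊕ Fin m) (Fin m ⊕ Fin m) ℝ) := by
    rw [sub_eq_add_neg, Matrix.fromBlocks_neg, Matrix.fromBlocks_add]
    simp
  split_ifs <;>
    first
      | (rw [← hG]; abel)
      | abel
      | simp


omit hB in
lemma det_cmp_Eb : (cmp (Eb m B N)).det = 1 := by
  rw [det_cmp_bool' _ (fun i j a b => by
    simp [Eb, Matrix.add_apply, Matrix.one_apply,
      apply_ite (fun M : Matrix (Fin m ⊕ Fin m) (Fin m ⊕ Fin m) ℝ =>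
        M (Sum.inl a) (Sum.inr b))])]
  have h0 : (fun p q : Fin (N+1) × Fin m => Eb m B N p.1 q.1 (Sum.inl p.2) (Sum.inl q.2))
      = (1 : Matrix (Fin (N+1) × Fin m) (Fin (N+1) × Fin m) ℝ) := by
    funext p q
    rcases p with ⟨i, a⟩; rcases q with ⟨j, b⟩
    simp only [Eb, Matrix.add_apply,
      apply_ite (fun M : Matrix (Fin m ⊕ Fin m) (Fin m ⊕ Fin m) ℝ =>
        M (Sum.inl a) (Sum.inl b)),
      Matrix.fromBlocks_apply₁₁, Matrix.zero_apply, ite_self, add_zero,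
      Matrix.one_apply, Sum.inl.injEq, Prod.ext_iff]
    by_cases h1 : j = i <;> by_cases hab : a = b <;> simp [h1, hab, eq_comm] <;>
      simp [show ¬ i = j from fun h => h1 h.symm]
  have h1 : (fun p q : Fin (N+1) × Fin m => Eb m B N p.1 q.1 (Sum.inr p.2) (Sum.inr q.2))
      = (1 : Matrix (Fin (N+1) × Fin m) (Fin (N+1) × Fin m) ℝ) := by
    funext p q
    rcases p with ⟨i, a⟩; rcases q with ⟨j, b⟩
    simp only [Eb, Matrix.add_apply,
      apply_ite (fun M : Matrix (Fin m ⊕ Fin m) (Fin m ⊕ Fin m) ℝ =>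
        M (Sum.inr a) (Sum.inr b)),
      Matrix.fromBlocks_apply₂₂, Matrix.zero_apply, ite_self, add_zero,
      Matrix.one_apply, Sum.inr.injEq, Prod.ext_iff]
    by_cases h1 : j = i <;> by_cases hab : a = b <;> simp [h1, hab, eq_comm] <;>
      simp [show ¬ i = j from fun h => h1 h.symm]
  rw [h0, h1, Matrix.det_one, mul_one]

omit hB in
lemma det_cmp_Db : (cmp (Db m B N)).det = ∏ i : Fin (N+1), (B ((i : ℤ) + 1)).det := by
  rw [det_cmp_upper _ (fun i j hj => by rw [Db, if_neg (ne_of_lt hj)])]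
  refine Finset.prod_congr rfl fun i _ => ?_
  rw [Db, if_pos rfl, Matrix.det_fromBlocks_zero₂₁, Matrix.det_one, one_mul,
    Matrix.det_transpose]

omit hB in
lemma det_Cmat :
    (Matrix.det fun i j : Fin (N+1) => if j = i + 1 then (1 : ℝ) else 0) = (-1 : ℝ)^N := by
  have hC : (fun i j : Fin (N+1) => if j = i + 1 then (1 : ℝ) else 0)
      = (1 : Matrix (Fin (N+1)) (Fin (N+1)) ℝ).submatrix (finRotate (N+1)) id := by
    funext i j
    simp [Matrix.one_apply, eq_comm]
  rw [hC, Matrix.det_permute, Matrix.det_one, mul_one, sign_finRotate]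
  simp


omit hB in
lemma castA (hA : ∀ i, A (i + ((N+1 : ℕ) : ℤ)) = A i) (i : Fin (N+1)) :
    A ((((i+1 : Fin (N+1)) : ℕ)) : ℤ) = A ((i : ℤ) + 1) := by
  by_cases hi : i = Fin.last N
  · subst hi
    rw [Fin.last_add_one]
    simp only [Fin.val_zero, Fin.val_last, Nat.cast_zero]
    have h := hA 0
    rw [zero_add] at h
    push_cast at h
    exact h.symm
  · have hv : ((i+1 : Fin (N+1)) : ℕ) = (i : ℕ) + 1 := by rw [Fin.val_add_one, if_neg hi]
    rw [hv]
    push_cast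
    rfl

omit hB in
lemma castB (hBp : ∀ i, B (i + ((N+1 : ℕ) : ℤ)) = B i) (i : Fin (N+1)) :
    B ((((i+1 : Fin (N+1)) : ℕ)) : ℤ) = B ((i : ℤ) + 1) := by
  by_cases hi : i = Fin.last N
  · subst hi
    rw [Fin.last_add_one]
    simp only [Fin.val_zero, Fin.val_last, Nat.cast_zero]
    have h := hBp 0
    rw [zero_add] at h
    push_cast at h
    exact h.symm
  · have hv : ((i+1 : Fin (N+1)) : ℕ) = (i : ℕ) + 1 := by rw [Fin.val_add_one, if_neg hi]
    rw [hv]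
    push_cast
    rfl

omit hB in
lemma castB1 (hBp : ∀ i, B (i + ((N+1 : ℕ) : ℤ)) = B i) (i : Fin (N+1)) :
    B (((((i+1 : Fin (N+1)) : ℕ)) : ℤ) - 1) = B ((i : ℤ)) := by
  by_cases hi : i = Fin.last N
  · subst hi
    rw [Fin.last_add_one]
    simp only [Fin.val_zero, Fin.val_last, Nat.cast_zero, zero_sub]
    have h := hBp (-1)
    push_cast at h
    rw [show (-1 : ℤ) + ((N : ℤ) + 1) = (N : ℤ) by ring] at h
    exact h.symm
  · have hv : ((i+1 : Fin (N+1)) : ℕ) = (i : ℕ) + 1 := by rw [Fin.val_add_one, if_neg hi]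
    rw [hv]
    push_cast
    rw [add_sub_cancel_right]

/-- The closed form of `Eb * (Db * Kb)`. -/
noncomputable def Mh : Matrix (Fin (N+1)) (Fin (N+1)) (Matrix (Fin m ⊕ Fin m) (Fin m ⊕ Fin m) ℝ) :=
  fun i j => (if j = i then Matrix.fromBlocks 0 1 0 (A ((i : ℤ) + 1)) else 0)
    + (if j = i - 1 then Matrix.fromBlocks 0 0 0 (-(B ((i : ℤ)))) else 0)
    - (if j = i + 1 then Matrix.fromBlocks 1 0 0 ((B ((i : ℤ) + 1))ᵀ) else 0)

omit hB in
lemma det_cmp_Mh (hA : ∀ i, A (i + ((N+1 : ℕ) : ℤ)) = A i)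
    (hBp : ∀ i, B (i + ((N+1 : ℕ) : ℤ)) = B i) :
    (cmp (Mh m A B N)).det = (-1 : ℝ)^m * (hessian m (N+1) A B).det := by
  rw [det_cmp_bool _ (fun i j a b => by
    simp [Mh, Matrix.sub_apply, Matrix.add_apply,
      apply_ite (fun M : Matrix (Fin m ⊕ Fin m) (Fin m ⊕ Fin m) ℝ =>
        M (Sum.inr a) (Sum.inl b))])]
  congr 1
  · -- the inl-inl block is `(-C) ⊗ₖ 1`
    have hN0 : (fun p q : Fin (N+1) × Fin m => Mh m A B N p.1 q.1 (Sum.inl p.2) (Sum.inl q.2))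
        = Matrix.kroneckerMap (· * ·)
            (-(Matrix.of fun i j : Fin (N+1) => if j = i + 1 then (1 : ℝ) else 0))
            (1 : Matrix (Fin m) (Fin m) ℝ) := by
      funext p q
      rcases p with ⟨i, a⟩; rcases q with ⟨j, b⟩
      simp only [Mh, Matrix.sub_apply, Matrix.add_apply,
        apply_ite (fun M : Matrix (Fin m ⊕ Fin m) (Fin m ⊕ Fin m) ℝ =>
          M (Sum.inl a) (Sum.inl b)),
        Matrix.fromBlocks_apply₁₁, Matrix.zero_apply, Matrix.one_apply,
        Matrix.kroneckerMap_apply, Matrix.neg_apply, Matrix.of_apply, Pi.neg_apply, ite_self]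
      split_ifs <;> ring
    rw [hN0, Matrix.det_kronecker, Matrix.det_one, one_pow, mul_one, Matrix.det_neg,
      Fintype.card_fin, Fintype.card_fin,
      show (Matrix.of fun i j : Fin (N+1) => if j = i + 1 then (1 : ℝ) else 0).det = (-1 : ℝ)^N
        from det_Cmat (N := N)]
    rw [show ((-1 : ℝ)^(N+1) * (-1)^N) = -1 by
      rw [← pow_add]; exact Odd.neg_one_pow ⟨N, by ring⟩]
  · have hN1 : (fun p q : Fin (N+1) × Fin m => Mh m A B N p.1 q.1 (Sum.inr p.2) (Sum.inr q.2))
        = (hessian m (N+1) A B).submatrix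
            (Equiv.prodCongr (Equiv.addRight (1 : Fin (N+1))) (Equiv.refl (Fin m)))
            (Equiv.prodCongr (Equiv.addRight (1 : Fin (N+1))) (Equiv.refl (Fin m))) := by
      funext p q
      rcases p with ⟨i, a⟩; rcases q with ⟨j, b⟩
      show _ = hessian m (N+1) A B (i + 1, a) (j + 1, b)
      have e2 : ∀ x y : Fin (N+1), (x + 1 = y) ↔ (x = y - 1) := fun x y => by
        rw [eq_sub_iff_add_eq]
      simp only [hessian]
      rw [castB1 m B N hBp i, castB m B N hBp i, castA m A N hA i]
      simp only [add_sub_cancel_right, e2]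
      simp only [Mh, Matrix.sub_apply, Matrix.add_apply,
        apply_ite (fun M : Matrix (Fin m ⊕ Fin m) (Fin m ⊕ Fin m) ℝ =>
          M (Sum.inr a) (Sum.inr b)),
        Matrix.fromBlocks_apply₂₂, Matrix.zero_apply, Matrix.transpose_apply,
        Matrix.neg_apply, Pi.neg_apply, ite_self]
      split_ifs <;> ring
    rw [hN1, Matrix.det_submatrix_equiv_self]

end HillAux

theorem hill_formula_discrete (m n : ℕ) (hm : 0 < m) [NeZero n]
    (A B : ℤ → Matrix (Fin m) (Fin m) ℝ)
    (hAper : ∀ i, A (i + n) = A i) (hBper : ∀ i, B (i + n) = B i)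
    (hAsym : ∀ i, (A i)ᵀ = A i) (hBinv : ∀ i, IsUnit (B i).det) :
    (monodromy m n A B - 1).det
      = (-1 : ℝ) ^ m * (hessian m n A B).det / ∏ i : Fin n, (B ((i : ℕ) : ℤ)).det := by
  obtain ⟨N, rfl⟩ : ∃ N, n = N + 1 :=
    ⟨n - 1, (Nat.succ_pred_eq_of_pos (Nat.pos_of_ne_zero (NeZero.ne n))).symm⟩
  have hK := HillAux.det_cmp_Kb m A B hBinv N
  have hfun : HillAux.Eb m B N * (HillAux.Db m B N * HillAux.Kb m A B N)
      = HillAux.Mh m A B N := by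
    funext i j
    exact HillAux.EDKb m A B hBinv N i j
  have hbig : (HillAux.cmp (HillAux.Eb m B N * (HillAux.Db m B N * HillAux.Kb m A B N))).det
      = (-1 : ℝ)^m * (hessian m (N+1) A B).det := by
    rw [hfun]
    exact HillAux.det_cmp_Mh m A B N hAper hBper
  rw [HillAux.cmp_mul, HillAux.cmp_mul, Matrix.det_mul, Matrix.det_mul,
    HillAux.det_cmp_Eb, HillAux.det_cmp_Db, one_mul, hK] at hbig
  have hprod : ∏ i : Fin (N+1), (B ((i : ℤ) + 1)).det
      = ∏ i : Fin (N+1), (B ((i : ℕ) : ℤ)).det := by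
    refine Fintype.prod_equiv (Equiv.addRight (1 : Fin (N+1))) _ _ (fun i => ?_)
    show (B ((i : ℤ) + 1)).det = (B (((i + 1 : Fin (N+1)) : ℕ) : ℤ)).det
    rw [HillAux.castB m B N hBper i]
  have hne : (∏ i : Fin (N+1), (B ((i : ℕ) : ℤ)).det) ≠ 0 :=
    Finset.prod_ne_zero_iff.mpr fun i _ => (hBinv _).ne_zero
  rw [HillAux.monodromy_eq, eq_div_iff hne]
  rw [← hprod]
  rw [mul_comm] at hbig
  exact hbig
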